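/- There exists a 2⊗3 density matrix ρ (a positive semidefinite complex matrix indexed by Fin 2 × Fin 3 with trace 1) whose normalized geometric discord is strictly smaller than its squared negativity: D(ρ) < N(ρ)². -/

import Mathlib

open Matrix
open scoped Kronecker ComplexOrder

noncomputable section

/-- Partial transpose with respect to the first (qubit) factor. -/
def ptA {n : ℕ} (ρ : Matrix (Fin 2 × Fin n) (Fin 2 × Fin n) ℂ) :
    Matrix (Fin 2 × Fin n) (Fin 2 × Fin n) ℂ :=
  fun p q => ρ (q.1, p.2) (p.1, q.2)

/-- The squared Frobenius (Hilbert-Schmidt) norm `‖X‖_F² = trace (Xᴴ X)`. -/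
def frobSq {m : Type*} [Fintype m] (X : Matrix m m ℂ) : ℝ :=
  (Xᴴ * X).trace.re

/-- The post-measurement state after a von Neumann measurement `{P, I - P}` on the
qubit subsystem `A`. -/
def measured {n : ℕ} (P : Matrix (Fin 2) (Fin 2) ℂ)
    (ρ : Matrix (Fin 2 × Fin n) (Fin 2 × Fin n) ℂ) :
    Matrix (Fin 2 × Fin n) (Fin 2 × Fin n) ℂ :=
  (P ⊗ₖ (1 : Matrix (Fin n) (Fin n) ℂ)) * ρ * (P ⊗ₖ (1 : Matrix (Fin n) (Fin n) ℂ)) +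
    ((1 - P) ⊗ₖ (1 : Matrix (Fin n) (Fin n) ℂ)) * ρ *
      ((1 - P) ⊗ₖ (1 : Matrix (Fin n) (Fin n) ℂ))

/-- The (normalized) geometric discord of a `2 ⊗ n` state. -/
def geomDiscord {n : ℕ} (ρ : Matrix (Fin 2 × Fin n) (Fin 2 × Fin n) ℂ) : ℝ :=
  2 * sInf {r : ℝ | ∃ P : Matrix (Fin 2) (Fin 2) ℂ,
    P * P = P ∧ Pᴴ = P ∧ P.trace = 1 ∧ r = frobSq (ρ - measured P ρ)}

/-- The negativity of a `2 ⊗ n` state, given a proof that `ρ^{T_A}` is Hermitian. -/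
def negativity {n : ℕ} (ρ : Matrix (Fin 2 × Fin n) (Fin 2 × Fin n) ℂ)
    (hH : (ptA ρ).IsHermitian) : ℝ :=
  (∑ i, |hH.eigenvalues i|) - 1

/-! ### Auxiliary material for the proof -/

set_option maxHeartbeats 1000000

lemma psd_diag_nonneg' {n : Type*} [Fintype n] [DecidableEq n] {A : Matrix n n ℂ}
    (hA : A.PosSemidef) (i : n) : 0 ≤ A i i := by
  exact hA.diag_nonneg

/-- For a Hermitian `X` and any Hermitian contraction `W` (i.e. `-1 ≤ W ≤ 1`),
`re (tr (X W)) ≤ ∑ |eigenvalues of X|`. -/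
lemma trace_mul_re_le' {n : Type*} [Fintype n] [DecidableEq n]
    {X W : Matrix n n ℂ} (hX : X.IsHermitian)
    (h1 : (1 - W).PosSemidef) (h2 : (1 + W).PosSemidef) :
    (X * W).trace.re ≤ ∑ i, |hX.eigenvalues i| := by
  set U : Matrix n n ℂ := (hX.eigenvectorUnitary : Matrix n n ℂ) with hUdef
  have hUU : star U * U = 1 := (Unitary.mem_iff.mp hX.eigenvectorUnitary.2).1
  set G : Matrix n n ℂ := star U * W * U with hGdef
  have htr : (X * W).trace = ∑ i, G i i * (hX.eigenvalues i : ℂ) := by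
    conv_lhs => rw [hX.spectral_theorem, Unitary.conjStarAlgAut_apply, ← hUdef]
    rw [mul_assoc (U * diagonal (RCLike.ofReal ∘ hX.eigenvalues)) (star U) W,
      trace_mul_comm, ← mul_assoc, ← hGdef]
    rw [Matrix.trace]
    congr 1
    ext i
    rw [Matrix.diag_apply, Matrix.mul_diagonal]
    rfl
  have hG1 : ∀ i, |(G i i).re| ≤ 1 := by
    intro i
    have hp : (star U * (1 + W) * U).PosSemidef := by
      simpa [Matrix.star_eq_conjTranspose] using h2.conjTranspose_mul_mul_same U
    have hm : (star U * (1 - W) * U).PosSemidef := by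
      simpa [Matrix.star_eq_conjTranspose] using h1.conjTranspose_mul_mul_same U
    have hpe : star U * (1 + W) * U = 1 + G := by
      rw [hGdef, mul_add, add_mul, mul_one, hUU]
    have hme : star U * (1 - W) * U = 1 - G := by
      rw [hGdef, mul_sub, sub_mul, mul_one, hUU]
    have h1p : 0 ≤ ((1 + G) i i) := by rw [← hpe]; exact psd_diag_nonneg' hp i
    have h1m : 0 ≤ ((1 - G) i i) := by rw [← hme]; exact psd_diag_nonneg' hm i
    rw [Complex.le_def] at h1p h1m
    have e1 : ((1 + G) i i).re = 1 + (G i i).re := by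
      simp [Matrix.add_apply, Matrix.one_apply]
    have e2 : ((1 - G) i i).re = 1 - (G i i).re := by
      simp [Matrix.sub_apply, Matrix.one_apply]
    rw [e1] at h1p; rw [e2] at h1m
    simp only [Complex.zero_re] at h1p h1m
    rw [abs_le]; constructor <;> [linarith [h1p.1]; linarith [h1m.1]]
  rw [htr, Complex.re_sum]
  apply Finset.sum_le_sum
  intro i _
  have hre : (G i i * (hX.eigenvalues i : ℂ)).re = (G i i).re * hX.eigenvalues i := by
    simp [Complex.mul_re, Complex.ofReal_re, Complex.ofReal_im]
  rw [hre]
  calc (G i i).re * hX.eigenvalues i ≤ |(G i i).re * hX.eigenvalues i| := le_abs_self _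
    _ = |(G i i).re| * |hX.eigenvalues i| := abs_mul _ _
    _ ≤ 1 * |hX.eigenvalues i| := mul_le_mul_of_nonneg_right (hG1 i) (abs_nonneg _)
    _ = |hX.eigenvalues i| := one_mul _

lemma frobSq_nonneg' {m : Type*} [Fintype m] (X : Matrix m m ℂ) : 0 ≤ frobSq X := by
  unfold frobSq
  rw [Matrix.trace, Complex.re_sum]
  refine Finset.sum_nonneg fun p _ => ?_
  rw [Matrix.diag_apply, Matrix.mul_apply, Complex.re_sum]
  refine Finset.sum_nonneg fun q _ => ?_
  rw [Matrix.conjTranspose_apply, Complex.star_def, ← Complex.normSq_eq_conj_mul_self,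
    Complex.ofReal_re]
  exact Complex.normSq_nonneg _

/-! The explicit matrices. -/

def Bmat : Matrix (Fin 2) (Fin 2 × Fin 3) ℂ :=
  Matrix.of fun k p => ![![![(3:ℂ)/10,0,0], ![0,3/10,0]], ![![0,1/10,0], ![0,0,9/10]]] k p.1 p.2

def Rmat : Matrix (Fin 2 × Fin 3) (Fin 2 × Fin 3) ℂ :=
  Matrix.of fun p q =>
    ![![!![(9:ℂ)/100,0,0; 0,1/100,0; 0,0,0], !![0,9/100,0; 0,0,9/100; 0,0,0]],
      ![!![0,0,0; 9/100,0,0; 0,9/100,0], !![0,0,0; 0,9/100,0; 0,0,81/100]]] p.1 q.1 p.2 q.2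

def PTmat : Matrix (Fin 2 × Fin 3) (Fin 2 × Fin 3) ℂ :=
  Matrix.of fun p q =>
    ![![!![(9:ℂ)/100,0,0; 0,1/100,0; 0,0,0], !![0,0,0; 9/100,0,0; 0,9/100,0]],
      ![!![0,9/100,0; 0,0,9/100; 0,0,0], !![0,0,0; 0,9/100,0; 0,0,81/100]]] p.1 q.1 p.2 q.2

def Wmat : Matrix (Fin 2 × Fin 3) (Fin 2 × Fin 3) ℂ :=
  Matrix.of fun p q =>
    ![![!![(1:ℂ),0,0; 0,37/685,0; 0,0,-203/445], !![0,0,0; 684/685,0,0; 0,396/445,0]],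
      ![!![0,684/685,0; 0,0,396/445; 0,0,0], !![-37/685,0,0; 0,203/445,0; 0,0,1]]] p.1 q.1 p.2 q.2

def Emat : Matrix (Fin 2 × Fin 3) (Fin 2 × Fin 3) ℂ :=
  Matrix.of fun p q =>
    ![![!![(0:ℂ),0,0; 0,0,0; 0,0,0], !![0,9/100,0; 0,0,9/100; 0,0,0]],
      ![!![0,0,0; 9/100,0,0; 0,9/100,0], !![0,0,0; 0,0,0; 0,0,0]]] p.1 q.1 p.2 q.2

def K0mat : Matrix (Fin 2 × Fin 3) (Fin 2 × Fin 3) ℂ :=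
  Matrix.of fun p q =>
    ![![!![(1:ℂ),0,0; 0,1,0; 0,0,1], !![(0:ℂ),0,0; 0,0,0; 0,0,0]],
      ![!![(0:ℂ),0,0; 0,0,0; 0,0,0], !![(0:ℂ),0,0; 0,0,0; 0,0,0]]] p.1 q.1 p.2 q.2

def K1mat : Matrix (Fin 2 × Fin 3) (Fin 2 × Fin 3) ℂ :=
  Matrix.of fun p q =>
    ![![!![(0:ℂ),0,0; 0,0,0; 0,0,0], !![(0:ℂ),0,0; 0,0,0; 0,0,0]],
      ![!![(0:ℂ),0,0; 0,0,0; 0,0,0], !![(1:ℂ),0,0; 0,1,0; 0,0,1]]] p.1 q.1 p.2 q.2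

def Dmat : Matrix (Fin 2 × Fin 3) (Fin 2 × Fin 3) ℂ :=
  Matrix.of fun p q =>
    ![![!![(9:ℂ)/100,0,0; 0,1/100,0; 0,0,0], !![(0:ℂ),0,0; 0,0,0; 0,0,0]],
      ![!![(0:ℂ),0,0; 0,0,0; 0,0,0], !![0,0,0; 0,(9:ℂ)/100,0; 0,0,81/100]]] p.1 q.1 p.2 q.2

def Lmat : Matrix (Fin 2) (Fin 2 × Fin 3) ℂ :=
  Matrix.of fun k p => ![![![(0:ℂ),18,0], ![-19,0,0]], ![![0,0,18], ![0,-11,0]]] k p.1 p.2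

def Mmat : Matrix (Fin 4) (Fin 2 × Fin 3) ℂ :=
  Matrix.of fun k p =>
    ![![![(1:ℂ),0,0], ![0,0,0]], ![![0,0,0], ![0,0,1]],
      ![![0,19,0], ![18,0,0]], ![![0,0,11], ![0,18,0]]] k p.1 p.2

lemma hRmat : Bmatᴴ * Bmat = Rmat := by
  ext ⟨a,i⟩ ⟨b,j⟩
  fin_cases a <;> fin_cases b <;> fin_cases i <;> fin_cases j <;>
    simp [Bmat, Rmat, Matrix.mul_apply, Matrix.conjTranspose_apply, Fin.sum_univ_succ,
      Matrix.vecHead, Matrix.vecTail, Complex.conj_ofNat] <;>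
    norm_num [Complex.ext_iff]

lemma hPTmat : ptA Rmat = PTmat := by
  ext ⟨a,i⟩ ⟨b,j⟩
  fin_cases a <;> fin_cases b <;> fin_cases i <;> fin_cases j <;>
    simp [ptA, Rmat, PTmat, Matrix.vecHead, Matrix.vecTail]

lemma hHermPT : PTmatᴴ = PTmat := by
  ext ⟨a,i⟩ ⟨b,j⟩
  fin_cases a <;> fin_cases b <;> fin_cases i <;> fin_cases j <;>
    simp [PTmat, Matrix.conjTranspose_apply, Matrix.vecHead, Matrix.vecTail,
      Complex.conj_ofNat] <;> norm_num [Complex.ext_iff]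

lemma htrace1 : Rmat.trace = 1 := by
  simp [Matrix.trace, Matrix.diag, Rmat, Fintype.sum_prod_type, Fin.sum_univ_succ,
    Matrix.vecHead, Matrix.vecTail]
  norm_num

lemma htraceW : (PTmat * Wmat).trace = (3906373/3048250 : ℂ) := by
  simp [Matrix.trace, Matrix.diag, Matrix.mul_apply, PTmat, Wmat, Fintype.sum_prod_type,
    Fin.sum_univ_succ, Matrix.vecHead, Matrix.vecTail]
  norm_num

lemma hdec1 : (1 : Matrix (Fin 2 × Fin 3) (Fin 2 × Fin 3) ℂ) - Wmat
    = Lmatᴴ * (diagonal ![(2:ℂ)/685, 2/445]) * Lmat := by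
  ext ⟨a,i⟩ ⟨b,j⟩
  fin_cases a <;> fin_cases b <;> fin_cases i <;> fin_cases j <;>
    simp [Wmat, Lmat, Matrix.mul_apply, Matrix.conjTranspose_apply, Matrix.one_apply,
      Fin.sum_univ_succ, Matrix.diagonal, Matrix.vecHead, Matrix.vecTail,
      Complex.conj_ofNat, -Prod.mk_one_one, -Prod.mk_zero_zero] <;>
    first | decide | norm_num [Complex.ext_iff]

lemma hdec2 : (1 : Matrix (Fin 2 × Fin 3) (Fin 2 × Fin 3) ℂ) + Wmat
    = Mmatᴴ * (diagonal ![(2:ℂ), 2, 2/685, 2/445]) * Mmat := by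
  ext ⟨a,i⟩ ⟨b,j⟩
  fin_cases a <;> fin_cases b <;> fin_cases i <;> fin_cases j <;>
    simp [Wmat, Mmat, Matrix.mul_apply, Matrix.conjTranspose_apply, Matrix.one_apply,
      Fin.sum_univ_succ, Matrix.diagonal, Matrix.vecHead, Matrix.vecTail,
      Complex.conj_ofNat, -Prod.mk_one_one, -Prod.mk_zero_zero] <;>
    first | decide | norm_num [Complex.ext_iff]

lemma hK0 : (!![(1:ℂ),0;0,0] ⊗ₖ (1 : Matrix (Fin 3) (Fin 3) ℂ)) = K0mat := by
  ext ⟨a,i⟩ ⟨b,j⟩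
  fin_cases a <;> fin_cases b <;> fin_cases i <;> fin_cases j <;>
    simp [K0mat, Matrix.kroneckerMap_apply, Matrix.one_apply, Matrix.vecHead, Matrix.vecTail]

lemma hK1 : ((1 - !![(1:ℂ),0;0,0]) ⊗ₖ (1 : Matrix (Fin 3) (Fin 3) ℂ)) = K1mat := by
  ext ⟨a,i⟩ ⟨b,j⟩
  fin_cases a <;> fin_cases b <;> fin_cases i <;> fin_cases j <;>
    simp [K1mat, Matrix.kroneckerMap_apply, Matrix.one_apply, Matrix.sub_apply,
      Matrix.vecHead, Matrix.vecTail]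

lemma hM1 : K0mat * Rmat * K0mat + K1mat * Rmat * K1mat = Dmat := by
  ext ⟨a,i⟩ ⟨b,j⟩
  fin_cases a <;> fin_cases b <;> fin_cases i <;> fin_cases j <;>
    simp [K0mat, K1mat, Rmat, Dmat, Matrix.mul_apply, Matrix.add_apply,
      Fintype.sum_prod_type, Fin.sum_univ_succ, Matrix.vecHead, Matrix.vecTail] <;>
    norm_num

lemma hEmat : Rmat - Dmat = Emat := by
  ext ⟨a,i⟩ ⟨b,j⟩
  fin_cases a <;> fin_cases b <;> fin_cases i <;> fin_cases j <;>
    simp [Rmat, Dmat, Emat, Matrix.sub_apply, Matrix.vecHead, Matrix.vecTail] <;> norm_num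

lemma hfrobE : frobSq Emat = 81/2500 := by
  simp [frobSq, Matrix.trace, Matrix.diag, Matrix.mul_apply, Matrix.conjTranspose_apply,
    Emat, Fintype.sum_prod_type, Fin.sum_univ_succ, Matrix.vecHead, Matrix.vecTail,
    Complex.conj_ofNat]
  norm_num

/-- There exists a `2 ⊗ 3` density matrix whose geometric discord is strictly
smaller than its squared negativity. -/
theorem exists_two_three_discord_lt_sq_negativity :
    ∃ ρ : Matrix (Fin 2 × Fin 3) (Fin 2 × Fin 3) ℂ,
      ρ.PosSemidef ∧ ρ.trace = 1 ∧
        ∃ hH : (ptA ρ).IsHermitian,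
          geomDiscord ρ < (negativity ρ hH) ^ 2 := by
  have hH : (ptA (Bmatᴴ * Bmat)).IsHermitian := by
    rw [hRmat, hPTmat]; exact hHermPT
  refine ⟨Bmatᴴ * Bmat, Matrix.posSemidef_conjTranspose_mul_self Bmat, ?_, hH, ?_⟩
  · rw [hRmat]; exact htrace1
  · -- geometric discord bound
    set S : Set ℝ := {r : ℝ | ∃ P : Matrix (Fin 2) (Fin 2) ℂ,
      P * P = P ∧ Pᴴ = P ∧ P.trace = 1 ∧
        r = frobSq (Bmatᴴ * Bmat - measured P (Bmatᴴ * Bmat))} with hS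
    have hbdd : BddBelow S := by
      refine ⟨0, fun r hr => ?_⟩
      obtain ⟨P, -, -, -, rfl⟩ := hr
      exact frobSq_nonneg' _
    have hmeasured : measured !![(1:ℂ),0;0,0] (Bmatᴴ * Bmat) = Dmat := by
      rw [measured, hRmat, hK0, hK1, hM1]
    have hmem : (81/2500 : ℝ) ∈ S := by
      refine ⟨!![(1:ℂ),0;0,0], ?_, ?_, ?_, ?_⟩
      · ext a b; fin_cases a <;> fin_cases b <;>
          simp [Matrix.mul_apply, Fin.sum_univ_succ]
      · ext a b; fin_cases a <;> fin_cases b <;>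
          simp [Matrix.conjTranspose_apply]
      · simp [Matrix.trace, Fin.sum_univ_succ]
      · rw [hmeasured, hRmat, hEmat, hfrobE]
    have hD : geomDiscord (Bmatᴴ * Bmat) ≤ 81/1250 := by
      have h1 : sInf S ≤ 81/2500 := csInf_le hbdd hmem
      have : geomDiscord (Bmatᴴ * Bmat) = 2 * sInf S := rfl
      rw [this]
      nlinarith
    -- negativity bound
    have hpsd1 : (1 - Wmat).PosSemidef := by
      rw [hdec1]
      refine (Matrix.posSemidef_diagonal_iff.mpr ?_).conjTranspose_mul_mul_same Lmat
      intro i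
      fin_cases i
      · simpa using Complex.zero_le_real.mpr (by norm_num : (0:ℝ) ≤ 2/685)
      · simpa using Complex.zero_le_real.mpr (by norm_num : (0:ℝ) ≤ 2/445)
    have hpsd2 : (1 + Wmat).PosSemidef := by
      rw [hdec2]
      refine (Matrix.posSemidef_diagonal_iff.mpr ?_).conjTranspose_mul_mul_same Mmat
      intro i
      fin_cases i
      · simpa using Complex.zero_le_real.mpr (by norm_num : (0:ℝ) ≤ 2)
      · simpa using Complex.zero_le_real.mpr (by norm_num : (0:ℝ) ≤ 2)
      · simpa using Complex.zero_le_real.mpr (by norm_num : (0:ℝ) ≤ 2/685)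
      · simpa using Complex.zero_le_real.mpr (by norm_num : (0:ℝ) ≤ 2/445)
    have hkey := trace_mul_re_le' hH hpsd1 hpsd2
    have htrval : ((ptA (Bmatᴴ * Bmat)) * Wmat).trace.re = (3906373/3048250 : ℝ) := by
      rw [hRmat, hPTmat, htraceW]
      rw [show ((3906373:ℂ)/3048250) = (((3906373/3048250 : ℝ)):ℂ) by push_cast; ring]
      exact Complex.ofReal_re _
    rw [htrval] at hkey
    have hNeg : (858123/3048250 : ℝ) ≤ negativity (Bmatᴴ * Bmat) hH := by
      unfold negativity
      linarith
    have hNegSq : ((858123/3048250 : ℝ))^2 ≤ (negativity (Bmatᴴ * Bmat) hH)^2 :=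
      pow_le_pow_left₀ (by norm_num) hNeg 2
    calc geomDiscord (Bmatᴴ * Bmat) ≤ 81/1250 := hD
      _ < ((858123/3048250 : ℝ))^2 := by norm_num
      _ ≤ (negativity (Bmatᴴ * Bmat) hH)^2 := hNegSq
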